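/- In the partitioned-clique reduction, any plan for the constructed instance must, for each ordered pair (i,j) with i ≠ j, contain at least one action of type a^v_j (group 3) with v ∈ V_i, and each such action requires an earlier action of type a^e_i (group 2) with e incident to v, which in turn requires an earlier action a^e (group 1); hence any plan contains at least 2·(k choose 2) group-3 actions set up by appropriate earlier actions. -/

import Mathlib

/-- A SAS+ action: a partial precondition and a partial effect. -/
structure SASAction (V D : Type) where
  pre : V → Option D
  eff : V → Option D

/-- The result of applying an action to a total state. -/
def applyAct {V D : Type} (a : SASAction V D) (s : V → D) : V → D :=
  fun v => (a.eff v).getD (s v)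

/-- An action is valid in a state if its precondition agrees with the state. -/
def validIn {V D : Type} (a : SASAction V D) (s : V → D) : Prop :=
  ∀ v x, a.pre v = some x → s v = x

/-- `isPlanFrom π s t` : the sequence `π` is a plan from state `s` to state `t`. -/
def isPlanFrom {V D : Type} : List (SASAction V D) → (V → D) → (V → D) → Prop
  | [], s, t => t = s
  | a :: π, s, t => validIn a s ∧ isPlanFrom π (applyAct a s) t

/-- The state resulting from applying a sequence of actions. -/
def runPlan {V D : Type} (π : List (SASAction V D)) (s : V → D) : V → D :=
  π.foldl (fun s a => applyAct a s) s

/-- A total state satisfies a partial state wherever the latter is defined. -/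
def satisfies {V D : Type} (goal : V → Option D) (s : V → D) : Prop :=
  ∀ v x, goal v = some x → s v = x

/-- Variables of the partitioned-clique reduction: edge variables, vertex
    variables, checking variables, and clean-up variables. -/
inductive PCVar (ν : Type) (k : ℕ) : Type where
  | edge : Sym2 ν → PCVar ν k
  | vert : ν → Fin k → PCVar ν k
  | check : Fin k → Fin k → PCVar ν k
  | cleanup : ν → PCVar ν k
  deriving DecidableEq

/-- Group-1 action `aᵉ` for `e = {u,w}`: sets `x(e) := 1`. -/
def act1 {ν : Type} [DecidableEq ν] {k : ℕ} (u w : ν) : SASAction (PCVar ν k) Bool :=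
  ⟨fun _ => none, fun z => if z = PCVar.edge s(u, w) then some true else none⟩

/-- Group-2 action `aᵉᵤ` for `e = {u,w}`: precondition `x(e) = 1`, effect
    `x(u, part w) := 1`. -/
def act2 {ν : Type} [DecidableEq ν] {k : ℕ} (part : ν → Fin k) (u w : ν) :
    SASAction (PCVar ν k) Bool :=
  ⟨fun z => if z = PCVar.edge s(u, w) then some true else none,
   fun z => if z = PCVar.vert u (part w) then some true else none⟩

/-- Group-3 action `aᵛⱼ`: precondition `x(v,j) = 1`, effect `x(part v, j) := 1`. -/
def act3 {ν : Type} [DecidableEq ν] {k : ℕ} (part : ν → Fin k) (v : ν) (j : Fin k) :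
    SASAction (PCVar ν k) Bool :=
  ⟨fun z => if z = PCVar.vert v j then some true else none,
   fun z => if z = PCVar.check (part v) j then some true else none⟩

/-- Group-4 action `aᵥ`: sets the clean-up variable `x(v) := 1`. -/
def act4 {ν : Type} [DecidableEq ν] {k : ℕ} (v : ν) : SASAction (PCVar ν k) Bool :=
  ⟨fun _ => none, fun z => if z = PCVar.cleanup v then some true else none⟩

/-- Group-5 action `aʲᵥ`: precondition `x(v) = 1`, effect `x(v,j) := 0`. -/
def act5 {ν : Type} [DecidableEq ν] {k : ℕ} (v : ν) (j : Fin k) :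
    SASAction (PCVar ν k) Bool :=
  ⟨fun z => if z = PCVar.cleanup v then some true else none,
   fun z => if z = PCVar.vert v j then some false else none⟩

/-- The action set of the partitioned-clique reduction. -/
def PCActions {ν : Type} [DecidableEq ν] {k : ℕ} (adj : ν → ν → Prop)
    (part : ν → Fin k) : Set (SASAction (PCVar ν k) Bool) :=
  {a | (∃ u w, adj u w ∧ a = act1 u w) ∨
       (∃ u w, adj u w ∧ a = act2 part u w) ∨
       (∃ v j, j ≠ part v ∧ a = act3 part v j) ∨
       (∃ v, a = act4 v) ∨
       (∃ v j, j ≠ part v ∧ a = act5 v j)}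

/-- The goal of the partitioned-clique reduction: all checking variables are `1`,
    all vertex variables are `0`, the rest are undefined. -/
def PCGoal {ν : Type} {k : ℕ} (part : ν → Fin k) : PCVar ν k → Option Bool
  | PCVar.check i j => if i ≠ j then some true else none
  | PCVar.vert v j => if j ≠ part v then some false else none
  | _ => none


section Aux
variable {V D : Type}

lemma planFrom_final (π : List (SASAction V D)) (s t : V → D)
    (h : isPlanFrom π s t) : t = runPlan π s := by
  induction π generalizing s with
  | nil => exact h
  | cons a π ih => exact ih _ h.2

lemma valid_at (π : List (SASAction V D)) (s t : V → D) (h : isPlanFrom π s t) :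
    ∀ m a, π[m]? = some a → validIn a (runPlan (π.take m) s) := by
  induction π generalizing s with
  | nil => intro m a hm; simp at hm
  | cons b π ih =>
    intro m a hm
    cases m with
    | zero =>
      simp at hm; subst hm
      simpa [runPlan] using h.1
    | succ m =>
      exact ih _ h.2 m a (by simpa using hm)

lemma mem_of_getElem?' {α : Type*} {l : List α} {m : ℕ} {a : α}
    (h : l[m]? = some a) : a ∈ l := by
  have := List.getElem?_eq_some_iff.mp h
  exact this.choose_spec ▸ List.getElem_mem _

lemma change_exists (π : List (SASAction V D)) (s : V → D) (v : V) (b : D)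
    (hrun : runPlan π s v = b) (hs : s v ≠ b) :
    ∃ m : ℕ, ∃ a : SASAction V D, π[m]? = some a ∧ a.eff v = some b := by
  induction π generalizing s with
  | nil => exact absurd hrun hs
  | cons c π ih =>
    by_cases hc : applyAct c s v = b
    · cases he : c.eff v with
      | none =>
        have hcc : applyAct c s v = s v := by simp [applyAct, he]
        exact absurd (hcc ▸ hc) hs
      | some d =>
        have hd : d = b := by simpa [applyAct, he] using hc
        exact ⟨0, c, by simp, by rw [he, hd]⟩
    · obtain ⟨m, a, hm, heff⟩ := ih (applyAct c s) hrun hc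
      exact ⟨m + 1, a, by simpa using hm, heff⟩

lemma change_exists_take (π : List (SASAction V D)) (m : ℕ) (s : V → D) (v : V) (b : D)
    (hrun : runPlan (π.take m) s v = b) (hs : s v ≠ b) :
    ∃ q < m, ∃ a : SASAction V D, π[q]? = some a ∧ a.eff v = some b := by
  obtain ⟨q, a, hq, heff⟩ := change_exists (π.take m) s v b hrun hs
  have hql : q < (π.take m).length := by
    by_contra hge
    rw [List.getElem?_eq_none (le_of_not_gt hge)] at hq
    exact nomatch hq
  have hqm : q < m := lt_of_lt_of_le hql (by simp)
  refine ⟨q, hqm, a, ?_, heff⟩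
  rwa [List.getElem?_take, if_pos hqm] at hq

end Aux

section Class
variable {ν : Type} [DecidableEq ν] {k : ℕ} {adj : ν → ν → Prop} {part : ν → Fin k}

lemma act1_sym2 (u w u' w' : ν) (h : s(u, w) = s(u', w')) :
    act1 (k := k) u w = act1 u' w' := by
  simp only [act1, h]

lemma eff_check_classify {a : SASAction (PCVar ν k) Bool}
    (ha : a ∈ PCActions adj part) (i j : Fin k)
    (h : a.eff (PCVar.check i j) = some true) :
    ∃ v, part v = i ∧ a = act3 part v j := by
  rcases ha with ⟨u, w, _, rfl⟩ | ⟨u, w, _, rfl⟩ | ⟨v, j', _, rfl⟩ | ⟨v, rfl⟩ | ⟨v, j', _, rfl⟩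
  · simp [act1] at h
  · simp [act2] at h
  · simp only [act3] at h
    split at h
    · rename_i heq
      obtain ⟨h1, h2⟩ : i = part v ∧ j = j' := by
        simpa using heq
      exact ⟨v, h1.symm, by rw [h2]⟩
    · exact nomatch h
  · simp [act4] at h
  · simp [act5] at h

lemma eff_vert_classify {a : SASAction (PCVar ν k) Bool}
    (ha : a ∈ PCActions adj part) (v : ν) (j : Fin k)
    (h : a.eff (PCVar.vert v j) = some true) :
    ∃ w, adj v w ∧ part w = j ∧ a = act2 part v w := by
  rcases ha with ⟨u, w, _, rfl⟩ | ⟨u, w, hadj, rfl⟩ | ⟨v', j', _, rfl⟩ | ⟨v', rfl⟩ | ⟨v', j', _, rfl⟩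
  · simp [act1] at h
  · simp only [act2] at h
    split at h
    · rename_i heq
      obtain ⟨h1, h2⟩ : v = u ∧ j = part w := by simpa using heq
      exact ⟨w, h1 ▸ hadj, h2.symm, by rw [h1]⟩
    · exact nomatch h
  · simp [act3] at h
  · simp [act4] at h
  · simp only [act5] at h
    split at h
    · simp at h
    · exact nomatch h

lemma eff_edge_classify {a : SASAction (PCVar ν k) Bool}
    (ha : a ∈ PCActions adj part) (v w : ν)
    (h : a.eff (PCVar.edge s(v, w)) = some true) :
    a = act1 v w := by
  rcases ha with ⟨u, w', _, rfl⟩ | ⟨u, w', _, rfl⟩ | ⟨v', j', _, rfl⟩ | ⟨v', rfl⟩ | ⟨v', j', _, rfl⟩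
  · simp only [act1] at h ⊢
    split at h
    · rename_i heq
      have : s(v, w) = s(u, w') := by simpa using heq
      exact (act1_sym2 u w' v w this.symm)
    · exact nomatch h
  · simp [act2] at h
  · simp [act3] at h
  · simp [act4] at h
  · simp [act5] at h

lemma act3_inj {v v' : ν} {j j' : Fin k}
    (h : act3 part v j = act3 part v' j') : v = v' ∧ j = j' := by
  have hp := congrFun (congrArg SASAction.pre h) (PCVar.vert v j)
  by_cases hvv : PCVar.vert v j = PCVar.vert v' j'
  · simpa using hvv
  · simp [act3, hvv] at hp

end Class

theorem plan_contains_group3_setups {ν : Type} [DecidableEq ν] {k : ℕ}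
    (adj : ν → ν → Prop) (part : ν → Fin k)
    (hsym : ∀ u w, adj u w → adj w u)
    (hpart : ∀ u w, adj u w → part u ≠ part w)
    (π : List (SASAction (PCVar ν k) Bool))
    (hπ : ∀ a ∈ π, a ∈ PCActions adj part)
    (t : PCVar ν k → Bool)
    (hplan : isPlanFrom π (fun _ => false) t)
    (hgoal : satisfies (PCGoal part) t) :
    ∃ idx : Fin k × Fin k → ℕ,
      (∀ i j : Fin k, i ≠ j →
        ∃ v : ν, part v = i ∧ π[idx (i, j)]? = some (act3 part v j) ∧
          ∃ q < idx (i, j), ∃ w : ν, adj v w ∧ part w = j ∧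
            π[q]? = some (act2 part v w) ∧
            ∃ r < q, π[r]? = some (act1 v w)) ∧
      (∀ p q : Fin k × Fin k, p.1 ≠ p.2 → q.1 ≠ q.2 → idx p = idx q → p = q) := by
  classical
  have hfinal : t = runPlan π (fun _ => false) := planFrom_final _ _ _ hplan
  have main : ∀ i j : Fin k, i ≠ j → ∃ m : ℕ,
      ∃ v : ν, part v = i ∧ π[m]? = some (act3 part v j) ∧
        ∃ q < m, ∃ w : ν, adj v w ∧ part w = j ∧
          π[q]? = some (act2 part v w) ∧
          ∃ r < q, π[r]? = some (act1 v w) := by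
    intro i j hij
    have hcheck : runPlan π (fun _ => false) (PCVar.check i j) = true := by
      rw [← hfinal]
      exact hgoal _ _ (by simp [PCGoal, hij])
    have hcheck' : runPlan (π.take π.length) (fun _ => false) (PCVar.check i j) = true := by
      simpa using hcheck
    obtain ⟨m, -, a, hm, heff⟩ :=
      change_exists_take π π.length _ _ _ hcheck' (by simp)
    have haP : a ∈ PCActions adj part := hπ a (mem_of_getElem?' hm)
    obtain ⟨v, hv, rfl⟩ := eff_check_classify haP i j heff
    have hvert : runPlan (π.take m) (fun _ => false) (PCVar.vert v j) = true :=
      valid_at π _ t hplan m _ hm _ _ (by simp [act3])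
    obtain ⟨q, hqm, b, hq, heffb⟩ := change_exists_take π m _ _ _ hvert (by simp)
    obtain ⟨w, hadj, hw, rfl⟩ :=
      eff_vert_classify (hπ b (mem_of_getElem?' hq)) v j heffb
    have hedge : runPlan (π.take q) (fun _ => false) (PCVar.edge s(v, w)) = true :=
      valid_at π _ t hplan q _ hq _ _ (by simp [act2])
    obtain ⟨r, hrq, c, hr, heffc⟩ := change_exists_take π q _ _ _ hedge (by simp)
    have hc : c = act1 v w := eff_edge_classify (hπ c (mem_of_getElem?' hr)) v w heffc
    exact ⟨m, v, hv, hm, q, hqm, w, hadj, hw, hq, r, hrq, hc ▸ hr⟩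
  refine ⟨fun p => if h : p.1 ≠ p.2 then (main p.1 p.2 h).choose else 0, ?_, ?_⟩
  · intro i j hij
    have hspec := (main i j hij).choose_spec
    simpa only [dif_pos (show (i, j).1 ≠ (i, j).2 from hij)] using hspec
  · intro p q hp hq hpq
    simp only [dif_pos hp, dif_pos hq] at hpq
    obtain ⟨vp, hvp, hmp, -⟩ := (main p.1 p.2 hp).choose_spec
    obtain ⟨vq, hvq, hmq, -⟩ := (main q.1 q.2 hq).choose_spec
    rw [hpq, hmq] at hmp
    obtain ⟨h1, h2⟩ := act3_inj (Option.some.inj hmp).symm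
    have : p.1 = q.1 := by rw [← hvp, ← hvq, h1]
    exact Prod.ext this h2
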